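/- (Hoffman; harmonic product relation for 𝒜-finite multiple zeta values.) For all words w = z_{k_1}⋯z_{k_r} and w' = z_{k'_1}⋯z_{k'_s} in 𝔥¹ (and hence, by bilinearity, for all w, w' ∈ 𝔥¹), one has Z_𝒜(w * w') = Z_𝒜(w)·Z_𝒜(w'). -/

import Mathlib

noncomputable section

namespace FMZVNote

/-- The noncommutative polynomial ring `𝔥 = ℚ⟨x,y⟩` in two indeterminates `x`, `y`. -/
abbrev H : Type := FreeAlgebra ℚ (Fin 2)

/-- The generator `x`. -/
def x : H := FreeAlgebra.ι ℚ 0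

/-- The generator `y`. -/
def y : H := FreeAlgebra.ι ℚ 1

/-- `z = x + y`. -/
def z : H := x + y

/-- `z_k = x^{k-1} y`. -/
def zk (k : ℕ) : H := x ^ (k - 1) * y

/-- The word `z_{k_1} ⋯ z_{k_r}` associated to an index `(k_1, …, k_r)`. -/
def zword (ks : List ℕ) : H := (ks.map zk).prod

/-- The ideal `⊕_p ℤ/pℤ` of finitely supported elements of `∏_p ℤ/pℤ`. -/
def finSupportIdeal : Ideal (∀ p : Nat.Primes, ZMod p) where
  carrier := {f | {p : Nat.Primes | f p ≠ 0}.Finite}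
  zero_mem' := by simp
  add_mem' := by
    intro a b ha hb
    refine (ha.union hb).subset ?_
    intro p hp
    simp only [Set.mem_setOf_eq, Set.mem_union]
    by_contra h
    push_neg at h
    exact hp (by simp [h.1, h.2])
  smul_mem' := by
    intro c f hf
    refine hf.subset ?_
    intro p hp
    simp only [Set.mem_setOf_eq] at hp ⊢
    intro h
    exact hp (by simp [h])

/-- The ring `𝒜 = (∏_p ℤ/pℤ)/(⊕_p ℤ/pℤ)`, where `p` runs over all primes. -/
abbrev Acal : Type := (∀ p : Nat.Primes, ZMod p) ⧸ finSupportIdeal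

theorem Acal.isUnit_intCast (n : ℤ) (hn : n ≠ 0) : IsUnit ((n : ℤ) : Acal) := by
  refine IsUnit.of_mul_eq_one
    (Ideal.Quotient.mk finSupportIdeal fun p => ((n : ZMod p))⁻¹) ?_
  have h1 : ((n : ℤ) : Acal)
      = Ideal.Quotient.mk finSupportIdeal (fun p => ((n : ZMod p))) := by
    rw [← map_intCast (Ideal.Quotient.mk finSupportIdeal) n]
    rfl
  rw [h1, ← map_mul, ← map_one (Ideal.Quotient.mk finSupportIdeal), Ideal.Quotient.eq]
  have hfin : {p : Nat.Primes | ((n : ZMod (p : ℕ))) = 0}.Finite := by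
    have hsub : {p : Nat.Primes | ((n : ZMod (p : ℕ))) = 0} ⊆
        (fun p : Nat.Primes => (p : ℕ)) ⁻¹' (Set.Iic n.natAbs) := by
      intro p hp
      simp only [Set.mem_setOf_eq] at hp
      haveI : NeZero (p : ℕ) := ⟨p.2.ne_zero⟩
      rw [ZMod.intCast_zmod_eq_zero_iff_dvd] at hp
      have hd : (p : ℕ) ∣ n.natAbs := by
        have := Int.natAbs_dvd_natAbs.mpr hp
        simpa using this
      exact Nat.le_of_dvd (Int.natAbs_pos.mpr hn) hd
    exact ((Set.finite_Iic _).preimage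
      (fun a _ b _ h => Subtype.ext h)).subset hsub
  refine hfin.subset ?_
  intro p hp
  simp only [Set.mem_setOf_eq] at hp ⊢
  by_contra h
  apply hp
  haveI : Fact (p : ℕ).Prime := ⟨p.2⟩
  simp [mul_inv_cancel₀ h]

/-- Every nonzero integer is invertible in `𝒜`, so `𝒜` is a `ℚ`-algebra. -/
instance : Algebra ℚ Acal :=
  (IsLocalization.lift (M := nonZeroDivisors ℤ) (S := ℚ)
    (g := Int.castRingHom Acal)
    (fun v => Acal.isUnit_intCast v.1 (nonZeroDivisors.ne_zero v.2))).toAlgebra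

instance : Module ℚ Acal := Algebra.toModule

/-- The finite multiple zeta value `ζ_𝒜(k_1,…,k_r)`, the class in `𝒜` of the tuple
`(Σ_{p>n_1>⋯>n_r≥1} 1/(n_1^{k_1}⋯n_r^{k_r}) mod p)_p`. -/
def zetaA (k : List ℕ) : Acal :=
  Ideal.Quotient.mk finSupportIdeal fun p =>
    ∑ n : Fin k.length → Fin p,
      if (∀ i, 0 < (n i : ℕ)) ∧
          (∀ i j : Fin k.length, i < j → (n j : ℕ) < (n i : ℕ)) then
        ∏ i, ((((n i : ℕ) : ZMod p)) ^ k.get i)⁻¹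
      else 0

/-- The harmonic product `z_{k_1}⋯z_{k_r} * z_{l_1}⋯z_{l_s}` of two words, determined by
`1*w = w*1 = w` and
`z_k w₁ * z_l w₂ = z_k (w₁ * z_l w₂) + z_l (z_k w₁ * w₂) + z_{k+l} (w₁ * w₂)`. -/
def hprod : List ℕ → List ℕ → H
  | [], w => zword w
  | k :: w1, [] => zword (k :: w1)
  | k :: w1, l :: w2 =>
      zk k * hprod w1 (l :: w2) + zk l * hprod (k :: w1) w2
        + zk (k + l) * hprod w1 w2
  termination_by w1 w2 => w1.length + w2.length


/-! ### Auxiliary development for the harmonic product relation -/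

/-- The stuffle (harmonic) product on index lists, as a list of words. -/
def hl : List ℕ → List ℕ → List (List ℕ)
  | [], w => [w]
  | k :: w1, [] => [k :: w1]
  | k :: w1, l :: w2 =>
      ((hl w1 (l :: w2)).map (k :: ·)) ++ ((hl (k :: w1) w2).map (l :: ·))
        ++ ((hl w1 w2).map ((k + l) :: ·))
  termination_by w1 w2 => w1.length + w2.length

lemma zword_cons (k : ℕ) (w : List ℕ) : zword (k :: w) = zk k * zword w := by
  simp [zword]

lemma hprod_eq (ks ls : List ℕ) : hprod ks ls = ((hl ks ls).map zword).sum := by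
  induction ks, ls using hl.induct with
  | case1 w => simp [hprod, hl]
  | case2 k w1 => simp [hprod, hl]
  | case3 k w1 l w2 ih1 ih2 ih3 =>
      rw [hprod, hl, ih1, ih2, ih3]
      simp only [List.map_append, List.map_map, List.sum_append, Function.comp_def,
        zword_cons, List.sum_map_mul_left]

lemma hl_mem (ks ls : List ℕ) :
    (∀ k ∈ ks, 1 ≤ k) → (∀ k ∈ ls, 1 ≤ k) →
    ∀ w ∈ hl ks ls, ∀ k ∈ w, 1 ≤ k := by
  induction ks, ls using hl.induct with
  | case1 w => intro _ h2 w hw; simp [hl] at hw; subst hw; exact h2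
  | case2 k w1 => intro h1 _ w hw; simp [hl] at hw; subst hw; exact h1
  | case3 k w1 l w2 ih1 ih2 ih3 =>
      intro h1 h2 w hw
      have hk : 1 ≤ k := h1 k (by simp)
      have hlh : 1 ≤ l := h2 l (by simp)
      have h1' : ∀ a ∈ w1, 1 ≤ a := fun a ha => h1 a (by simp [ha])
      have h2' : ∀ a ∈ w2, 1 ≤ a := fun a ha => h2 a (by simp [ha])
      rw [hl] at hw
      simp only [List.mem_append, List.mem_map] at hw
      rcases hw with ((⟨v, hv, rfl⟩ | ⟨v, hv, rfl⟩) | ⟨v, hv, rfl⟩)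
      · intro a ha
        rcases List.mem_cons.mp ha with rfl | ha
        · exact hk
        · exact ih1 h1' h2 v hv a ha
      · intro a ha
        rcases List.mem_cons.mp ha with rfl | ha
        · exact hlh
        · exact ih2 h1 h2' v hv a ha
      · intro a ha
        rcases List.mem_cons.mp ha with rfl | ha
        · exact le_trans hk (Nat.le_add_right _ _)
        · exact ih3 h1' h2' v hv a ha

/-- The truncated nested harmonic sum in `ZMod p`. -/
def SS (p : ℕ) : List ℕ → ℕ → ZMod p
  | [], _ => 1
  | k :: w, N =>
      ∑ n : Fin p, if 0 < (n : ℕ) ∧ (n : ℕ) < N then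
        ((((n : ℕ) : ZMod p)) ^ k)⁻¹ * SS p w (n : ℕ) else 0


lemma list_sum_sum_comm {α β M : Type*} [AddCommMonoid M] (L : List α) (s : Finset β)
    (G : α → β → M) :
    ∑ b ∈ s, (L.map (fun a => G a b)).sum = (L.map (fun a => ∑ b ∈ s, G a b)).sum := by
  induction L with
  | nil => simp
  | cons a t ih => simp [Finset.sum_add_distrib, ih]

lemma ite_mul_list_sum {α M : Type*} [NonUnitalNonAssocSemiring M] (c : Prop) [Decidable c]
    (x : M) (L : List α) (f : α → M) :
    (if c then x * (L.map f).sum else 0)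
      = (L.map (fun a => if c then x * f a else 0)).sum := by
  by_cases h : c
  · simp only [if_pos h, ← List.sum_map_mul_left]
  · simp [if_neg h]

lemma SS_mul (p : ℕ) [hp : Fact p.Prime] (w1 w2 : List ℕ) (N : ℕ) :
    SS p w1 N * SS p w2 N = ((hl w1 w2).map (fun w => SS p w N)).sum := by
  induction w1, w2 using hl.induct generalizing N with
  | case1 w => simp [SS, hl]
  | case2 k w1 => simp [SS, hl]
  | case3 k w1 l w2 ih1 ih2 ih3 =>
      have e1 : SS p (k :: w1) N
          = ∑ n : Fin p, if 0 < (n : ℕ) ∧ (n : ℕ) < N then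
              ((((n : ℕ) : ZMod p)) ^ k)⁻¹ * SS p w1 (n : ℕ) else 0 := rfl
      have e2 : SS p (l :: w2) N
          = ∑ m : Fin p, if 0 < (m : ℕ) ∧ (m : ℕ) < N then
              ((((m : ℕ) : ZMod p)) ^ l)⁻¹ * SS p w2 (m : ℕ) else 0 := rfl
      set A : Fin p → ZMod p := fun n =>
        if 0 < (n : ℕ) ∧ (n : ℕ) < N then
          ((((n : ℕ) : ZMod p)) ^ k)⁻¹ * SS p w1 (n : ℕ) else 0 with hA
      set B : Fin p → ZMod p := fun m =>
        if 0 < (m : ℕ) ∧ (m : ℕ) < N then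
          ((((m : ℕ) : ZMod p)) ^ l)⁻¹ * SS p w2 (m : ℕ) else 0 with hB
      rw [e1, e2, Finset.sum_mul_sum]
      have tri : ∀ n m : Fin p, A n * B m =
          (if (m : ℕ) < (n : ℕ) then A n * B m else 0)
            + (if (n : ℕ) < (m : ℕ) then A n * B m else 0)
            + (if n = m then A n * B m else 0) := by
        intro n m
        rcases lt_trichotomy (n : ℕ) (m : ℕ) with h | h | h
        · rw [if_neg (by omega), if_pos h, if_neg (by intro he; subst he; omega)]
          ring
        · rw [if_neg (by omega), if_neg (by omega), if_pos (Fin.ext h)]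
          ring
        · rw [if_pos h, if_neg (by omega), if_neg (by intro he; subst he; omega)]
          ring
      calc (∑ n : Fin p, ∑ m : Fin p, A n * B m)
          = (∑ n : Fin p, ∑ m : Fin p, ((if (m : ℕ) < (n : ℕ) then A n * B m else 0)
              + (if (n : ℕ) < (m : ℕ) then A n * B m else 0)
              + (if n = m then A n * B m else 0))) := by
            exact Finset.sum_congr rfl fun n _ => Finset.sum_congr rfl fun m _ => tri n m
        _ = (∑ n : Fin p, ∑ m : Fin p, if (m : ℕ) < (n : ℕ) then A n * B m else 0)
              + (∑ n : Fin p, ∑ m : Fin p, if (n : ℕ) < (m : ℕ) then A n * B m else 0)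
              + (∑ n : Fin p, ∑ m : Fin p, if n = m then A n * B m else 0) := by
            simp [Finset.sum_add_distrib]
        _ = ((hl w1 (l :: w2)).map (fun w => SS p (k :: w) N)).sum
              + ((hl (k :: w1) w2).map (fun w => SS p (l :: w) N)).sum
              + ((hl w1 w2).map (fun w => SS p ((k + l) :: w) N)).sum := by
            have h1 : (∑ n : Fin p, ∑ m : Fin p, if (m : ℕ) < (n : ℕ) then A n * B m else 0)
                = ((hl w1 (l :: w2)).map (fun w => SS p (k :: w) N)).sum := by
              have inner1 : ∀ n : Fin p,
                  (∑ m : Fin p, if (m : ℕ) < (n : ℕ) then A n * B m else 0)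
                  = if 0 < (n : ℕ) ∧ (n : ℕ) < N then
                      ((((n : ℕ) : ZMod p)) ^ k)⁻¹
                        * ((hl w1 (l :: w2)).map (fun w => SS p w (n : ℕ))).sum
                    else 0 := by
                intro n
                by_cases hc : 0 < (n : ℕ) ∧ (n : ℕ) < N
                · rw [if_pos hc]
                  have hstep : ∀ m : Fin p, (if (m : ℕ) < (n : ℕ) then A n * B m else 0)
                      = ((((n : ℕ) : ZMod p)) ^ k)⁻¹ * SS p w1 (n : ℕ)
                        * (if 0 < (m : ℕ) ∧ (m : ℕ) < (n : ℕ) then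
                            ((((m : ℕ) : ZMod p)) ^ l)⁻¹ * SS p w2 (m : ℕ) else 0) := by
                    intro m
                    by_cases hm : (m : ℕ) < (n : ℕ)
                    · rw [if_pos hm]
                      simp only [hA, hB]
                      rw [if_pos hc]
                      have hiff : (0 < (m : ℕ) ∧ (m : ℕ) < N) ↔
                          (0 < (m : ℕ) ∧ (m : ℕ) < (n : ℕ)) := by
                        constructor <;> exact fun h => ⟨h.1, by omega⟩
                      rw [if_congr hiff rfl rfl]
                    · rw [if_neg hm, if_neg (by omega), mul_zero]
                  rw [Finset.sum_congr rfl fun m _ => hstep m, ← Finset.mul_sum]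
                  have hSl : (∑ m : Fin p, if 0 < (m : ℕ) ∧ (m : ℕ) < (n : ℕ) then
                      ((((m : ℕ) : ZMod p)) ^ l)⁻¹ * SS p w2 (m : ℕ) else 0)
                      = SS p (l :: w2) (n : ℕ) := rfl
                  rw [hSl, mul_assoc, ih1 (n : ℕ)]
                · rw [if_neg hc]
                  refine Finset.sum_eq_zero fun m _ => ?_
                  simp only [hA, if_neg hc, zero_mul, ite_self]
              rw [Finset.sum_congr rfl fun n _ => inner1 n,
                Finset.sum_congr rfl fun n _ => ite_mul_list_sum _ _ _ _,
                list_sum_sum_comm]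
              exact congrArg List.sum (List.map_congr_left fun w _ => rfl)
            have h2 : (∑ n : Fin p, ∑ m : Fin p, if (n : ℕ) < (m : ℕ) then A n * B m else 0)
                = ((hl (k :: w1) w2).map (fun w => SS p (l :: w) N)).sum := by
              rw [Finset.sum_comm]
              have inner2 : ∀ m : Fin p,
                  (∑ n : Fin p, if (n : ℕ) < (m : ℕ) then A n * B m else 0)
                  = if 0 < (m : ℕ) ∧ (m : ℕ) < N then
                      ((((m : ℕ) : ZMod p)) ^ l)⁻¹
                        * ((hl (k :: w1) w2).map (fun w => SS p w (m : ℕ))).sum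
                    else 0 := by
                intro m
                by_cases hc : 0 < (m : ℕ) ∧ (m : ℕ) < N
                · rw [if_pos hc]
                  have hstep : ∀ n : Fin p, (if (n : ℕ) < (m : ℕ) then A n * B m else 0)
                      = ((((m : ℕ) : ZMod p)) ^ l)⁻¹ * SS p w2 (m : ℕ)
                        * (if 0 < (n : ℕ) ∧ (n : ℕ) < (m : ℕ) then
                            ((((n : ℕ) : ZMod p)) ^ k)⁻¹ * SS p w1 (n : ℕ) else 0) := by
                    intro n
                    by_cases hn : (n : ℕ) < (m : ℕ)
                    · rw [if_pos hn]
                      simp only [hA, hB]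
                      rw [if_pos hc]
                      have hiff : (0 < (n : ℕ) ∧ (n : ℕ) < N) ↔
                          (0 < (n : ℕ) ∧ (n : ℕ) < (m : ℕ)) := by
                        constructor <;> exact fun h => ⟨h.1, by omega⟩
                      rw [if_congr hiff rfl rfl]
                      ring
                    · rw [if_neg hn, if_neg (by omega), mul_zero]
                  rw [Finset.sum_congr rfl fun n _ => hstep n, ← Finset.mul_sum]
                  have hSk : (∑ n : Fin p, if 0 < (n : ℕ) ∧ (n : ℕ) < (m : ℕ) then
                      ((((n : ℕ) : ZMod p)) ^ k)⁻¹ * SS p w1 (n : ℕ) else 0)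
                      = SS p (k :: w1) (m : ℕ) := rfl
                  rw [hSk]
                  have : ((((m : ℕ) : ZMod p)) ^ l)⁻¹ * SS p w2 (m : ℕ) * SS p (k :: w1) (m : ℕ)
                      = ((((m : ℕ) : ZMod p)) ^ l)⁻¹
                          * (SS p (k :: w1) (m : ℕ) * SS p w2 (m : ℕ)) := by ring
                  rw [this, ih2 (m : ℕ)]
                · rw [if_neg hc]
                  refine Finset.sum_eq_zero fun n _ => ?_
                  simp only [hB, if_neg hc, mul_zero, ite_self]
              rw [Finset.sum_congr rfl fun m _ => inner2 m,
                Finset.sum_congr rfl fun m _ => ite_mul_list_sum _ _ _ _,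
                list_sum_sum_comm]
              exact congrArg List.sum (List.map_congr_left fun w _ => rfl)
            have h3 : (∑ n : Fin p, ∑ m : Fin p, if n = m then A n * B m else 0)
                = ((hl w1 w2).map (fun w => SS p ((k + l) :: w) N)).sum := by
              have hd : ∀ n : Fin p, (∑ m : Fin p, if n = m then A n * B m else 0)
                  = A n * B n := fun n => by rw [Finset.sum_ite_eq]; simp
              rw [Finset.sum_congr rfl fun n _ => hd n]
              have inner3 : ∀ n : Fin p, A n * B n
                  = if 0 < (n : ℕ) ∧ (n : ℕ) < N then
                      ((((n : ℕ) : ZMod p)) ^ (k + l))⁻¹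
                        * ((hl w1 w2).map (fun w => SS p w (n : ℕ))).sum
                    else 0 := by
                intro n
                simp only [hA, hB]
                by_cases hc : 0 < (n : ℕ) ∧ (n : ℕ) < N
                · rw [if_pos hc, if_pos hc, if_pos hc, ← ih3 (n : ℕ), pow_add, mul_inv]
                  ring
                · simp only [if_neg hc, mul_zero]
              rw [Finset.sum_congr rfl fun n _ => inner3 n,
                Finset.sum_congr rfl fun n _ => ite_mul_list_sum _ _ _ _,
                list_sum_sum_comm]
              exact congrArg List.sum (List.map_congr_left fun w _ => rfl)
            rw [h1, h2, h3]
        _ = ((hl (k :: w1) (l :: w2)).map (fun w => SS p w N)).sum := by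
            rw [hl]
            simp only [List.map_append, List.map_map, List.sum_append, Function.comp_def]


lemma inner_eq_SS (p : ℕ) (ks : List ℕ) (N : ℕ) :
    (∑ n : Fin ks.length → Fin p,
      if (∀ i, 0 < (n i : ℕ)) ∧ (∀ i j, i < j → (n j : ℕ) < (n i : ℕ))
          ∧ (∀ i, (n i : ℕ) < N) then
        ∏ i, ((((n i : ℕ) : ZMod p)) ^ ks.get i)⁻¹ else 0) = SS p ks N := by
  induction ks generalizing N with
  | nil => simp [SS]
  | cons k w ih =>
      simp only [List.length_cons]
      rw [← Equiv.sum_comp (Fin.consEquiv (fun _ : Fin (w.length + 1) => Fin p)),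
        Fintype.sum_prod_type]
      simp only [Fin.consEquiv_apply]
      have main : ∀ n0 : Fin p, (∑ t : Fin w.length → Fin p,
          if (∀ i : Fin (w.length + 1), 0 < (Fin.cons (α := fun _ => Fin p) n0 t i : Fin p).val)
              ∧ (∀ i j : Fin (w.length + 1), i < j →
                  (Fin.cons (α := fun _ => Fin p) n0 t j : Fin p).val < (Fin.cons (α := fun _ => Fin p) n0 t i : Fin p).val)
              ∧ (∀ i : Fin (w.length + 1), (Fin.cons (α := fun _ => Fin p) n0 t i : Fin p).val < N) then
            ∏ i : Fin (w.length + 1),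
              ((((Fin.cons (α := fun _ => Fin p) n0 t i : Fin p).val : ZMod p)) ^ (k :: w).get i)⁻¹ else 0)
          = if 0 < (n0 : ℕ) ∧ (n0 : ℕ) < N then
              ((((n0 : ℕ) : ZMod p)) ^ k)⁻¹ * SS p w (n0 : ℕ) else 0 := by
        intro n0
        have hcond : ∀ t : Fin w.length → Fin p,
            ((∀ i : Fin (w.length + 1), 0 < (Fin.cons (α := fun _ => Fin p) n0 t i : Fin p).val)
              ∧ (∀ i j : Fin (w.length + 1), i < j →
                  (Fin.cons (α := fun _ => Fin p) n0 t j : Fin p).val < (Fin.cons (α := fun _ => Fin p) n0 t i : Fin p).val)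
              ∧ (∀ i : Fin (w.length + 1), (Fin.cons (α := fun _ => Fin p) n0 t i : Fin p).val < N))
            ↔ ((0 < (n0 : ℕ) ∧ (n0 : ℕ) < N) ∧
                ((∀ i, 0 < (t i : ℕ)) ∧ (∀ i j, i < j → (t j : ℕ) < (t i : ℕ))
                  ∧ (∀ i, (t i : ℕ) < (n0 : ℕ)))) := by
          intro t
          constructor
          · rintro ⟨hpos, hdec, hbd⟩
            refine ⟨⟨by simpa using hpos 0, by simpa using hbd 0⟩,
              fun i => by simpa using hpos i.succ,
              fun i j hij => by
                simpa using hdec i.succ j.succ (by simpa [Fin.succ_lt_succ_iff] using hij),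
              fun i => by simpa using hdec 0 i.succ i.succ_pos⟩
          · rintro ⟨⟨h0, hN⟩, hpos, hdec, hlt⟩
            refine ⟨?_, ?_, ?_⟩
            · intro i
              rcases Fin.eq_zero_or_eq_succ i with rfl | ⟨i', rfl⟩
              · simpa using h0
              · simpa using hpos i'
            · intro i j hij
              rcases Fin.eq_zero_or_eq_succ j with rfl | ⟨j', rfl⟩
              · exact absurd hij (by simp)
              rcases Fin.eq_zero_or_eq_succ i with rfl | ⟨i', rfl⟩
              · simpa using hlt j'
              · simp only [Fin.cons_succ]
                exact hdec i' j' (by simpa [Fin.succ_lt_succ_iff] using hij)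
            · intro i
              rcases Fin.eq_zero_or_eq_succ i with rfl | ⟨i', rfl⟩
              · simpa using hN
              · simp only [Fin.cons_succ]
                exact lt_trans (hlt i') hN
        have hprodeq : ∀ t : Fin w.length → Fin p,
            (∏ i : Fin (w.length + 1),
              ((((Fin.cons (α := fun _ => Fin p) n0 t i : Fin p).val : ZMod p)) ^ (k :: w).get i)⁻¹)
            = ((((n0 : ℕ) : ZMod p)) ^ k)⁻¹
                * ∏ i : Fin w.length, ((((t i : ℕ) : ZMod p)) ^ w.get i)⁻¹ := by
          intro t
          rw [Fin.prod_univ_succ]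
          simp [Fin.cons_zero, Fin.cons_succ]
        calc (∑ t : Fin w.length → Fin p,
            if (∀ i : Fin (w.length + 1), 0 < (Fin.cons (α := fun _ => Fin p) n0 t i : Fin p).val)
                ∧ (∀ i j : Fin (w.length + 1), i < j →
                    (Fin.cons (α := fun _ => Fin p) n0 t j : Fin p).val < (Fin.cons (α := fun _ => Fin p) n0 t i : Fin p).val)
                ∧ (∀ i : Fin (w.length + 1), (Fin.cons (α := fun _ => Fin p) n0 t i : Fin p).val < N) then
              ∏ i : Fin (w.length + 1),
                ((((Fin.cons (α := fun _ => Fin p) n0 t i : Fin p).val : ZMod p)) ^ (k :: w).get i)⁻¹ else 0)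
            = ∑ t : Fin w.length → Fin p,
              if (0 < (n0 : ℕ) ∧ (n0 : ℕ) < N) then
                ((((n0 : ℕ) : ZMod p)) ^ k)⁻¹
                  * (if (∀ i, 0 < (t i : ℕ)) ∧ (∀ i j, i < j → (t j : ℕ) < (t i : ℕ))
                      ∧ (∀ i, (t i : ℕ) < (n0 : ℕ)) then
                      ∏ i : Fin w.length, ((((t i : ℕ) : ZMod p)) ^ w.get i)⁻¹ else 0)
              else 0 := by
              refine Finset.sum_congr rfl fun t _ => ?_
              rw [if_congr (hcond t) (hprodeq t) rfl]
              by_cases h0 : 0 < (n0 : ℕ) ∧ (n0 : ℕ) < N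
              · by_cases ht : (∀ i, 0 < (t i : ℕ)) ∧ (∀ i j, i < j → (t j : ℕ) < (t i : ℕ))
                    ∧ (∀ i, (t i : ℕ) < (n0 : ℕ))
                · rw [if_pos ⟨h0, ht⟩, if_pos h0, if_pos ht]
                · rw [if_neg (fun hh => ht hh.2), if_pos h0, if_neg ht, mul_zero]
              · rw [if_neg (fun hh => h0 hh.1), if_neg h0]
          _ = if 0 < (n0 : ℕ) ∧ (n0 : ℕ) < N then
              ((((n0 : ℕ) : ZMod p)) ^ k)⁻¹ * SS p w (n0 : ℕ) else 0 := by
              by_cases h0 : 0 < (n0 : ℕ) ∧ (n0 : ℕ) < N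
              · simp only [if_pos h0]
                rw [← Finset.mul_sum, ih (n0 : ℕ)]
              · simp [h0]
      rw [Finset.sum_congr rfl fun n0 _ => main n0]
      rfl


lemma mk_list_sum {α : Type*} (L : List α) (Ffun : α → ∀ p : Nat.Primes, ZMod p) :
    Ideal.Quotient.mk finSupportIdeal (fun p => (L.map (fun a => Ffun a p)).sum)
      = (L.map (fun a => Ideal.Quotient.mk finSupportIdeal (Ffun a))).sum := by
  induction L with
  | nil =>
      simp only [List.map_nil, List.sum_nil]
      exact map_zero _
  | cons a t ih =>
      simp only [List.map_cons, List.sum_cons]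
      rw [← ih, ← map_add]
      rfl

lemma zetaA_eq (ks : List ℕ) :
    zetaA ks = Ideal.Quotient.mk finSupportIdeal
      (fun p : Nat.Primes => SS (p : ℕ) ks (p : ℕ)) := by
  unfold zetaA
  congr 1
  funext p
  rw [← inner_eq_SS (p : ℕ) ks (p : ℕ)]
  refine Finset.sum_congr rfl fun n _ => if_congr ?_ rfl rfl
  constructor
  · rintro ⟨h1, h2⟩
    exact ⟨h1, h2, fun i => (n i).isLt⟩
  · rintro ⟨h1, h2, -⟩
    exact ⟨h1, h2⟩
/-- **Harmonic product relation for `𝒜`-finite multiple zeta values** (Hoffman).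
For all words `w = z_{k_1}⋯z_{k_r}`, `w' = z_{k'_1}⋯z_{k'_s}` in `𝔥¹`:
`Z_𝒜(w * w') = Z_𝒜(w)·Z_𝒜(w')`. -/
theorem harmonic_product_relation_fmzv_A
    (Z : H →ₗ[ℚ] Acal) (hZone : Z 1 = 1)
    (hZ : ∀ ks : List ℕ, (∀ k ∈ ks, 1 ≤ k) → Z (zword ks) = zetaA ks)
    (ks ls : List ℕ) (hks : ∀ k ∈ ks, 1 ≤ k) (hls : ∀ k ∈ ls, 1 ≤ k) :
    Z (hprod ks ls) = Z (zword ks) * Z (zword ls) := by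
  have hmem := hl_mem ks ls hks hls
  rw [hprod_eq, map_list_sum, List.map_map, hZ ks hks, hZ ls hls, zetaA_eq, zetaA_eq,
    ← map_mul]
  have hmul : ((fun p : Nat.Primes => SS (p : ℕ) ks (p : ℕ))
        * (fun p : Nat.Primes => SS (p : ℕ) ls (p : ℕ)))
      = fun p : Nat.Primes => ((hl ks ls).map (fun w => SS (p : ℕ) w (p : ℕ))).sum := by
    funext p
    haveI : Fact (p : ℕ).Prime := ⟨p.2⟩
    exact SS_mul (p : ℕ) ks ls (p : ℕ)
  rw [hmul, mk_list_sum]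
  refine congrArg List.sum (List.map_congr_left fun w hw => ?_)
  rw [Function.comp_apply, hZ w (hmem w hw), zetaA_eq]

end FMZVNote
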